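/- Let 𝒯 ⊆ ([n] choose 3) be a nonempty intersecting family in which every two distinct members intersect in exactly one element, and suppose every element x lying in some member of 𝒯 lies in exactly 3 members, and for every pair S contained in a member of 𝒯 there are at least 2 members of 𝒯 disjoint from S. Then 𝒯 is isomorphic to the family of the seven lines of the Fano plane. -/
import Mathlib

/-- The seven lines of the Fano plane. -/
def fanoLines : Finset (Finset ℕ) :=
  {{1, 2, 3}, {1, 4, 5}, {1, 6, 7}, {2, 4, 6}, {2, 5, 7}, {3, 5, 6}, {3, 4, 7}}

set_option maxHeartbeats 4000000 in
lemma fano_inj (p1 p2 p3 p4 p5 p6 p7 : ℕ)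
    (h12 : p1 ≠ p2) (h13 : p1 ≠ p3) (h14 : p1 ≠ p4) (h15 : p1 ≠ p5) (h16 : p1 ≠ p6)
    (h17 : p1 ≠ p7) (h23 : p2 ≠ p3) (h24 : p2 ≠ p4) (h25 : p2 ≠ p5) (h26 : p2 ≠ p6)
    (h27 : p2 ≠ p7) (h34 : p3 ≠ p4) (h35 : p3 ≠ p5) (h36 : p3 ≠ p6) (h37 : p3 ≠ p7)
    (h45 : p4 ≠ p5) (h46 : p4 ≠ p6) (h47 : p4 ≠ p7) (h56 : p5 ≠ p6) (h57 : p5 ≠ p7)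
    (h67 : p6 ≠ p7) :
    Function.Injective (fun n => if n = 1 then p1 else if n = 2 then p2 else if n = 3 then p3
      else if n = 4 then p4 else if n = 5 then p5 else if n = 6 then p6
      else if n = 7 then p7 else p1 + p2 + p3 + p4 + p5 + p6 + p7 + n + 1) := by
  intro a b hab
  simp only at hab
  by_cases ha : 1 ≤ a ∧ a ≤ 7
  · by_cases hb : 1 ≤ b ∧ b ≤ 7
    · obtain ⟨ha1, ha2⟩ := ha
      obtain ⟨hb1, hb2⟩ := hb
      interval_cases a <;> interval_cases b
      all_goals simp_all
    · have hb1 : b ≠ 1 := by omega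
      have hb2 : b ≠ 2 := by omega
      have hb3 : b ≠ 3 := by omega
      have hb4 : b ≠ 4 := by omega
      have hb5 : b ≠ 5 := by omega
      have hb6 : b ≠ 6 := by omega
      have hb7 : b ≠ 7 := by omega
      rw [if_neg hb1, if_neg hb2, if_neg hb3, if_neg hb4, if_neg hb5, if_neg hb6, if_neg hb7]
        at hab
      split_ifs at hab <;> omega
  · by_cases hb : 1 ≤ b ∧ b ≤ 7
    · have ha1 : a ≠ 1 := by omega
      have ha2 : a ≠ 2 := by omega
      have ha3 : a ≠ 3 := by omega
      have ha4 : a ≠ 4 := by omega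
      have ha5 : a ≠ 5 := by omega
      have ha6 : a ≠ 6 := by omega
      have ha7 : a ≠ 7 := by omega
      rw [if_neg ha1, if_neg ha2, if_neg ha3, if_neg ha4, if_neg ha5, if_neg ha6, if_neg ha7]
        at hab
      split_ifs at hab <;> omega
    · have ha1 : a ≠ 1 := by omega
      have ha2 : a ≠ 2 := by omega
      have ha3 : a ≠ 3 := by omega
      have ha4 : a ≠ 4 := by omega
      have ha5 : a ≠ 5 := by omega
      have ha6 : a ≠ 6 := by omega
      have ha7 : a ≠ 7 := by omega
      rw [if_neg ha1, if_neg ha2, if_neg ha3, if_neg ha4, if_neg ha5, if_neg ha6, if_neg ha7]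
        at hab
      have hb1 : b ≠ 1 := by omega
      have hb2 : b ≠ 2 := by omega
      have hb3 : b ≠ 3 := by omega
      have hb4 : b ≠ 4 := by omega
      have hb5 : b ≠ 5 := by omega
      have hb6 : b ≠ 6 := by omega
      have hb7 : b ≠ 7 := by omega
      rw [if_neg hb1, if_neg hb2, if_neg hb3, if_neg hb4, if_neg hb5, if_neg hb6, if_neg hb7]
        at hab
      omega


lemma triple_card {x y z : ℕ} (h1 : x ≠ y) (h2 : x ≠ z) (h3 : y ≠ z) :
    ({x, y, z} : Finset ℕ).card = 3 := by
  rw [Finset.card_insert_of_notMem (by simp [h1, h2]),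
      Finset.card_insert_of_notMem (by simp [h3]), Finset.card_singleton]

lemma card3_decomp {A : Finset ℕ} (h : A.card = 3) {x : ℕ} (hx : x ∈ A) :
    ∃ y z, x ≠ y ∧ x ≠ z ∧ y ≠ z ∧ A = {x, y, z} := by
  obtain ⟨a, b, c, hab, hac, hbc, rfl⟩ := Finset.card_eq_three.mp h
  simp only [Finset.mem_insert, Finset.mem_singleton] at hx
  rcases hx with rfl | rfl | rfl
  · exact ⟨b, c, hab, hac, hbc, rfl⟩
  · exact ⟨a, c, hab.symm, hbc, hac, by ext t; simp; tauto⟩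
  · exact ⟨a, b, hac.symm, hbc.symm, hab, by ext t; simp; tauto⟩

set_option maxHeartbeats 1000000 in
theorem stmt_3 (T : Finset (Finset ℕ))
    (huniform : ∀ A ∈ T, A.card = 3)
    (hne : T.Nonempty)
    (hint : ∀ A ∈ T, ∀ B ∈ T, (A ∩ B).Nonempty)
    (hone : ∀ A ∈ T, ∀ B ∈ T, A ≠ B → (A ∩ B).card = 1)
    (hdeg : ∀ x : ℕ, (∃ A ∈ T, x ∈ A) → (T.filter (fun A => x ∈ A)).card = 3)
    (hpair : ∀ S : Finset ℕ, S.card = 2 → (∃ A ∈ T, S ⊆ A) →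
      2 ≤ (T.filter (fun A => A ∩ S = ∅)).card) :
    ∃ f : ℕ → ℕ, Function.Injective f ∧ T = fanoLines.image (Finset.image f) := by
  classical
  have uniq : ∀ B ∈ T, ∀ C ∈ T, B ≠ C → ∀ x y, x ∈ B → x ∈ C → y ∈ B → y ∈ C → x = y := by
    intro B hB C hC hBC x y hxB hxC hyB hyC
    have h1 := hone B hB C hC hBC
    obtain ⟨z, hz⟩ := Finset.card_eq_one.mp h1
    have hx : x ∈ B ∩ C := Finset.mem_inter.mpr ⟨hxB, hxC⟩
    have hy : y ∈ B ∩ C := Finset.mem_inter.mpr ⟨hyB, hyC⟩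
    rw [hz, Finset.mem_singleton] at hx hy
    rw [hx, hy]
  have meetex : ∀ B ∈ T, ∀ C ∈ T, ∃ x, x ∈ B ∧ x ∈ C := by
    intro B hB C hC
    obtain ⟨x, hx⟩ := hint B hB C hC
    exact ⟨x, Finset.mem_inter.mp hx⟩
  have lines : ∀ x, ∀ A ∈ T, x ∈ A → ∃ B C, B ∈ T ∧ C ∈ T ∧ x ∈ B ∧ x ∈ C ∧
      A ≠ B ∧ A ≠ C ∧ B ≠ C ∧ ∀ D ∈ T, x ∈ D → D = A ∨ D = B ∨ D = C := by
    intro x A hA hx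
    have h3 := hdeg x ⟨A, hA, hx⟩
    obtain ⟨a, b, c, hab, hac, hbc, habc⟩ := Finset.card_eq_three.mp h3
    have key : ∀ D, D ∈ ({a, b, c} : Finset (Finset ℕ)) ↔ D ∈ T ∧ x ∈ D := by
      intro D; rw [← habc]; simp
    have ha := (key a).mp (by simp)
    have hb := (key b).mp (by simp)
    have hc := (key c).mp (by simp)
    have hA' : A = a ∨ A = b ∨ A = c := by
      have := (key A).mpr ⟨hA, hx⟩; simpa using this
    have hall : ∀ D ∈ T, x ∈ D → D = a ∨ D = b ∨ D = c := by
      intro D hD hxD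
      have := (key D).mpr ⟨hD, hxD⟩; simpa using this
    rcases hA' with rfl | rfl | rfl
    · exact ⟨b, c, hb.1, hc.1, hb.2, hc.2, hab, hac, hbc, hall⟩
    · exact ⟨a, c, ha.1, hc.1, ha.2, hc.2, hab.symm, hbc, hac, fun D hD hxD => by
        rcases hall D hD hxD with h | h | h <;> tauto⟩
    · exact ⟨a, b, ha.1, hb.1, ha.2, hb.2, hac.symm, hbc.symm, hab, fun D hD hxD => by
        rcases hall D hD hxD with h | h | h <;> tauto⟩
  obtain ⟨A, hA⟩ := hne
  have hAne : A.Nonempty := Finset.card_pos.mp (by rw [huniform A hA]; norm_num)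
  obtain ⟨p1, hp1A⟩ := hAne
  obtain ⟨p2, p3, h12, h13, h23, hAeq⟩ := card3_decomp (huniform A hA) hp1A
  have hp2A : p2 ∈ A := by rw [hAeq]; simp
  have hp3A : p3 ∈ A := by rw [hAeq]; simp
  -- lines through p1
  obtain ⟨L2, L3, hL2, hL3, hp1L2, hp1L3, hAL2, hAL3, hL23, hp1lines⟩ := lines p1 A hA hp1A
  obtain ⟨u, v, h1u, h1v, huv, hL2eq⟩ := card3_decomp (huniform L2 hL2) hp1L2
  obtain ⟨w, z, h1w, h1z, hwz, hL3eq⟩ := card3_decomp (huniform L3 hL3) hp1L3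
  have hnotA : ∀ t, t ∈ L2 → t ∈ A → t = p1 := fun t h1 h2 =>
    uniq L2 hL2 A hA (Ne.symm hAL2) t p1 h1 h2 hp1L2 hp1A
  have hnotA' : ∀ t, t ∈ L3 → t ∈ A → t = p1 := fun t h1 h2 =>
    uniq L3 hL3 A hA (Ne.symm hAL3) t p1 h1 h2 hp1L3 hp1A
  have hL2L3 : ∀ t, t ∈ L2 → t ∈ L3 → t = p1 := fun t h1 h2 =>
    uniq L2 hL2 L3 hL3 hL23 t p1 h1 h2 hp1L2 hp1L3
  have hp2L2 : p2 ∉ L2 := fun h => h12 ((hnotA p2 h hp2A).symm)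
  have hp3L2 : p3 ∉ L2 := fun h => h13 ((hnotA p3 h hp3A).symm)
  have hp2L3 : p2 ∉ L3 := fun h => h12 ((hnotA' p2 h hp2A).symm)
  have hp3L3 : p3 ∉ L3 := fun h => h13 ((hnotA' p3 h hp3A).symm)
  -- lines through p2
  obtain ⟨B, C, hB, hC, hp2B, hp2C, hAB, hAC, hBC, hp2lines⟩ := lines p2 A hA hp2A
  have hp1B : p1 ∉ B := by
    intro h
    rcases hp1lines B hB h with rfl | rfl | rfl
    · exact hAB rfl
    · exact hp2L2 hp2B
    · exact hp2L3 hp2B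
  have hp1C : p1 ∉ C := by
    intro h
    rcases hp1lines C hC h with rfl | rfl | rfl
    · exact hAC rfl
    · exact hp2L2 hp2C
    · exact hp2L3 hp2C
  -- meet points of B, C with L2 : define p4 ∈ B, p5 ∈ C
  obtain ⟨p4, p5, h45, h14, h15, hL2eq', hp4B, hp5C⟩ :
      ∃ p4 p5, p4 ≠ p5 ∧ p1 ≠ p4 ∧ p1 ≠ p5 ∧ L2 = {p1, p4, p5} ∧ p4 ∈ B ∧ p5 ∈ C := by
    obtain ⟨x, hxB, hxL2⟩ := meetex B hB L2 hL2
    obtain ⟨x', hx'C, hx'L2⟩ := meetex C hC L2 hL2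
    have hxne : x ≠ x' := by
      intro h; subst h
      have : x = p2 := uniq B hB C hC hBC x p2 hxB hx'C hp2B hp2C
      exact hp2L2 (this ▸ hxL2)
    have hx : x = u ∨ x = v := by
      rw [hL2eq] at hxL2; simp at hxL2
      rcases hxL2 with rfl | h | h
      · exact absurd hxB hp1B
      · exact Or.inl h
      · exact Or.inr h
    have hx' : x' = u ∨ x' = v := by
      rw [hL2eq] at hx'L2; simp at hx'L2
      rcases hx'L2 with rfl | h | h
      · exact absurd hx'C hp1C
      · exact Or.inl h
      · exact Or.inr h
    rcases hx with rfl | rfl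
    · have hv : x' = v := hx'.resolve_left (fun h => hxne h.symm)
      exact ⟨x, v, fun h => hxne (h.trans hv.symm), h1u, h1v, hL2eq, hxB, hv ▸ hx'C⟩
    · have hu : x' = u := hx'.resolve_right (fun h => hxne h.symm)
      refine ⟨x, u, fun h => hxne (h.trans hu.symm), h1v, h1u, ?_, hxB, hu ▸ hx'C⟩
      rw [hL2eq]; ext t; simp; tauto
  -- meet points of B, C with L3 : define p6 ∈ B, p7 ∈ C
  obtain ⟨p6, p7, h67, h16, h17, hL3eq', hp6B, hp7C⟩ :
      ∃ p6 p7, p6 ≠ p7 ∧ p1 ≠ p6 ∧ p1 ≠ p7 ∧ L3 = {p1, p6, p7} ∧ p6 ∈ B ∧ p7 ∈ C := by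
    obtain ⟨x, hxB, hxL3⟩ := meetex B hB L3 hL3
    obtain ⟨x', hx'C, hx'L3⟩ := meetex C hC L3 hL3
    have hxne : x ≠ x' := by
      intro h; subst h
      have : x = p2 := uniq B hB C hC hBC x p2 hxB hx'C hp2B hp2C
      exact hp2L3 (this ▸ hxL3)
    have hx : x = w ∨ x = z := by
      rw [hL3eq] at hxL3; simp at hxL3
      rcases hxL3 with rfl | h | h
      · exact absurd hxB hp1B
      · exact Or.inl h
      · exact Or.inr h
    have hx' : x' = w ∨ x' = z := by
      rw [hL3eq] at hx'L3; simp at hx'L3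
      rcases hx'L3 with rfl | h | h
      · exact absurd hx'C hp1C
      · exact Or.inl h
      · exact Or.inr h
    rcases hx with rfl | rfl
    · have hv : x' = z := hx'.resolve_left (fun h => hxne h.symm)
      exact ⟨x, z, fun h => hxne (h.trans hv.symm), h1w, h1z, hL3eq, hxB, hv ▸ hx'C⟩
    · have hu : x' = w := hx'.resolve_right (fun h => hxne h.symm)
      refine ⟨x, w, fun h => hxne (h.trans hu.symm), h1z, h1w, ?_, hxB, hu ▸ hx'C⟩
      rw [hL3eq]; ext t; simp; tauto
  have hp4L2 : p4 ∈ L2 := by rw [hL2eq']; simp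
  have hp5L2 : p5 ∈ L2 := by rw [hL2eq']; simp
  have hp6L3 : p6 ∈ L3 := by rw [hL3eq']; simp
  have hp7L3 : p7 ∈ L3 := by rw [hL3eq']; simp
  -- pairwise distinctness
  have h24 : p2 ≠ p4 := fun h => hp2L2 (h ▸ hp4L2)
  have h25 : p2 ≠ p5 := fun h => hp2L2 (h ▸ hp5L2)
  have h26 : p2 ≠ p6 := fun h => hp2L3 (h ▸ hp6L3)
  have h27 : p2 ≠ p7 := fun h => hp2L3 (h ▸ hp7L3)
  have h34 : p3 ≠ p4 := fun h => hp3L2 (h ▸ hp4L2)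
  have h35 : p3 ≠ p5 := fun h => hp3L2 (h ▸ hp5L2)
  have h36 : p3 ≠ p6 := fun h => hp3L3 (h ▸ hp6L3)
  have h37 : p3 ≠ p7 := fun h => hp3L3 (h ▸ hp7L3)
  have h46 : p4 ≠ p6 := fun h => h14 (hL2L3 p4 hp4L2 (h ▸ hp6L3)).symm
  have h47 : p4 ≠ p7 := fun h => h14 (hL2L3 p4 hp4L2 (h ▸ hp7L3)).symm
  have h56 : p5 ≠ p6 := fun h => h15 (hL2L3 p5 hp5L2 (h ▸ hp6L3)).symm
  have h57 : p5 ≠ p7 := fun h => h15 (hL2L3 p5 hp5L2 (h ▸ hp7L3)).symm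
  -- B and C determined
  have hBeq : B = {p2, p4, p6} := by
    have hsub : ({p2, p4, p6} : Finset ℕ) ⊆ B := by
      intro t ht; simp only [Finset.mem_insert, Finset.mem_singleton] at ht
      rcases ht with rfl | rfl | rfl <;> assumption
    exact (Finset.eq_of_subset_of_card_le hsub
      (by rw [huniform B hB, triple_card h24 h26 h46])).symm
  have hCeq : C = {p2, p5, p7} := by
    have hsub : ({p2, p5, p7} : Finset ℕ) ⊆ C := by
      intro t ht; simp only [Finset.mem_insert, Finset.mem_singleton] at ht
      rcases ht with rfl | rfl | rfl <;> assumption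
    exact (Finset.eq_of_subset_of_card_le hsub
      (by rw [huniform C hC, triple_card h25 h27 h57])).symm
  have hp3B : p3 ∉ B := by
    rw [hBeq]; simp only [Finset.mem_insert, Finset.mem_singleton]
    push_neg; exact ⟨h23.symm, h34, h36⟩
  have hp3C : p3 ∉ C := by
    rw [hCeq]; simp only [Finset.mem_insert, Finset.mem_singleton]
    push_neg; exact ⟨h23.symm, h35, h37⟩
  -- lines through p3
  obtain ⟨D, E, hD, hE, hp3D, hp3E, hAD, hAE, hDE, hp3lines⟩ := lines p3 A hA hp3A
  have hp1D : p1 ∉ D := by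
    intro h
    rcases hp1lines D hD h with rfl | rfl | rfl
    · exact hAD rfl
    · exact hp3L2 hp3D
    · exact hp3L3 hp3D
  have hp1E : p1 ∉ E := by
    intro h
    rcases hp1lines E hE h with rfl | rfl | rfl
    · exact hAE rfl
    · exact hp3L2 hp3E
    · exact hp3L3 hp3E
  have hp2D : p2 ∉ D := by
    intro h
    rcases hp2lines D hD h with rfl | rfl | rfl
    · exact hAD rfl
    · exact hp3B hp3D
    · exact hp3C hp3D
  have hp2E : p2 ∉ E := by
    intro h
    rcases hp2lines E hE h with rfl | rfl | rfl
    · exact hAE rfl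
    · exact hp3B hp3E
    · exact hp3C hp3E
  -- N1 through p3 and p4, N2 through p3 and p5
  obtain ⟨N1, N2, hN1, hN2, hp3N1, hp3N2, hN12, hp4N1, hp5N2, hp1N1, hp1N2, hp2N1, hp2N2,
      hp3lines'⟩ :
      ∃ N1 N2, N1 ∈ T ∧ N2 ∈ T ∧ p3 ∈ N1 ∧ p3 ∈ N2 ∧ N1 ≠ N2 ∧ p4 ∈ N1 ∧ p5 ∈ N2 ∧
        p1 ∉ N1 ∧ p1 ∉ N2 ∧ p2 ∉ N1 ∧ p2 ∉ N2 ∧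
        ∀ X ∈ T, p3 ∈ X → X = A ∨ X = N1 ∨ X = N2 := by
    obtain ⟨x, hxD, hxL2⟩ := meetex D hD L2 hL2
    obtain ⟨x', hx'E, hx'L2⟩ := meetex E hE L2 hL2
    have hxne : x ≠ x' := by
      intro h; subst h
      have : x = p3 := uniq D hD E hE hDE x p3 hxD hx'E hp3D hp3E
      exact hp3L2 (this ▸ hxL2)
    have hx : x = p4 ∨ x = p5 := by
      rw [hL2eq'] at hxL2; simp at hxL2
      rcases hxL2 with rfl | h | h
      · exact absurd hxD hp1D
      · exact Or.inl h
      · exact Or.inr h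
    have hx' : x' = p4 ∨ x' = p5 := by
      rw [hL2eq'] at hx'L2; simp at hx'L2
      rcases hx'L2 with rfl | h | h
      · exact absurd hx'E hp1E
      · exact Or.inl h
      · exact Or.inr h
    rcases hx with rfl | rfl
    · have hx'5 : x' = p5 := hx'.resolve_left (fun h => hxne h.symm)
      exact ⟨D, E, hD, hE, hp3D, hp3E, hDE, hxD, hx'5 ▸ hx'E, hp1D, hp1E, hp2D, hp2E,
        hp3lines⟩
    · have hx'4 : x' = p4 := hx'.resolve_right (fun h => hxne h.symm)
      exact ⟨E, D, hE, hD, hp3E, hp3D, hDE.symm, hx'4 ▸ hx'E, hxD, hp1E, hp1D, hp2E, hp2D,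
        fun X hX hx => by rcases hp3lines X hX hx with h | h | h <;> tauto⟩
  -- N1 = {p3, p4, p7}
  have hN1B : N1 ≠ B := fun h => hp3B (h ▸ hp3N1)
  have hN2C : N2 ≠ C := fun h => hp3C (h ▸ hp3N2)
  have hp7N1 : p7 ∈ N1 := by
    obtain ⟨t, htN1, htL3⟩ := meetex N1 hN1 L3 hL3
    rw [hL3eq'] at htL3; simp at htL3
    rcases htL3 with h | h | h
    · exact absurd (h ▸ htN1) hp1N1
    · exact absurd (uniq N1 hN1 B hB hN1B p4 p6 hp4N1 hp4B (h ▸ htN1) hp6B) h46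
    · exact h ▸ htN1
  have hp6N2 : p6 ∈ N2 := by
    obtain ⟨t, htN2, htL3⟩ := meetex N2 hN2 L3 hL3
    rw [hL3eq'] at htL3; simp at htL3
    rcases htL3 with h | h | h
    · exact absurd (h ▸ htN2) hp1N2
    · exact h ▸ htN2
    · exact absurd (uniq N2 hN2 C hC hN2C p5 p7 hp5N2 hp5C (h ▸ htN2) hp7C) h57
  have hN1eq : N1 = {p3, p4, p7} := by
    have hsub : ({p3, p4, p7} : Finset ℕ) ⊆ N1 := by
      intro t ht; simp only [Finset.mem_insert, Finset.mem_singleton] at ht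
      rcases ht with rfl | rfl | rfl <;> assumption
    exact (Finset.eq_of_subset_of_card_le hsub
      (by rw [huniform N1 hN1, triple_card h34 h37 h47])).symm
  have hN2eq : N2 = {p3, p5, p6} := by
    have hsub : ({p3, p5, p6} : Finset ℕ) ⊆ N2 := by
      intro t ht; simp only [Finset.mem_insert, Finset.mem_singleton] at ht
      rcases ht with rfl | rfl | rfl <;> assumption
    exact (Finset.eq_of_subset_of_card_le hsub
      (by rw [huniform N2 hN2, triple_card h35 h36 h56])).symm
  -- T is exactly these seven lines
  have hTeq : T = ({A, L2, L3, B, C, N2, N1} : Finset (Finset ℕ)) := by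
    apply Finset.Subset.antisymm
    · intro X hX
      obtain ⟨q, hqX, hqA⟩ := meetex X hX A hA
      rw [hAeq] at hqA; simp at hqA
      simp only [Finset.mem_insert, Finset.mem_singleton]
      rcases hqA with rfl | rfl | rfl
      · rcases hp1lines X hX hqX with rfl | rfl | rfl
        · exact Or.inl rfl
        · exact Or.inr (Or.inl rfl)
        · exact Or.inr (Or.inr (Or.inl rfl))
      · rcases hp2lines X hX hqX with rfl | rfl | rfl
        · exact Or.inl rfl
        · exact Or.inr (Or.inr (Or.inr (Or.inl rfl)))
        · exact Or.inr (Or.inr (Or.inr (Or.inr (Or.inl rfl))))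
      · rcases hp3lines' X hX hqX with rfl | rfl | rfl
        · exact Or.inl rfl
        · exact Or.inr (Or.inr (Or.inr (Or.inr (Or.inr (Or.inr rfl)))))
        · exact Or.inr (Or.inr (Or.inr (Or.inr (Or.inr (Or.inl rfl)))))
    · intro X hX
      simp only [Finset.mem_insert, Finset.mem_singleton] at hX
      rcases hX with rfl | rfl | rfl | rfl | rfl | rfl | rfl <;> assumption
  refine ⟨fun n => if n = 1 then p1 else if n = 2 then p2 else if n = 3 then p3
      else if n = 4 then p4 else if n = 5 then p5 else if n = 6 then p6
      else if n = 7 then p7 else p1 + p2 + p3 + p4 + p5 + p6 + p7 + n + 1, ?_, ?_⟩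
  · exact fano_inj p1 p2 p3 p4 p5 p6 p7 h12 h13 h14 h15 h16 h17 h23 h24 h25 h26 h27
      h34 h35 h36 h37 h45 h46 h47 h56 h57 h67
  · rw [hTeq, hAeq, hL2eq', hL3eq', hBeq, hCeq, hN2eq, hN1eq]
    simp only [fanoLines, Finset.image_insert, Finset.image_singleton]
    norm_num
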